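/- Let N ≥ 2, a > 0, ω₀ ≠ 0 real numbers, ω̂ and b real row vectors of length d−1 with d ≥ 2, Â a symmetric (d−1)×(d−1) matrix, and S = (1/(ω₀N))(ω̂ᵀb + bᵀω̂ − (a/ω₀)ω̂ᵀω̂). Let R be an N×N orthogonal matrix with first row (1/√N, …, 1/√N) and let R_n ∈ ℝ^{N−1} denote the n-th column of R without its first entry. Define M to be the symmetric ((N−1) + N(d−1))-dimensional square matrix in block form: upper-left block (a/N)·I_{N−1}; upper-right blocks (1/√N)·R_n b for n = 1, …, N (each of size (N−1)×(d−1)); and lower-right N×N array of (d−1)×(d−1) blocks equal to Â − S on the diagonal and −S off the diagonal. Then det M = −(1/ω₀²) · ((det A)/N)^{N−1} · det A_ω, where A = [[a, b],[bᵀ, Â]] and A_ω = [[0, ω₀, ω̂],[ω₀, a, b],[ω̂ᵀ, bᵀ, Â]]. -/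

import Mathlib

open Matrix Kronecker

lemma schur_piece (n : ℕ) (a ω₀ : ℝ) (hω₀ : ω₀ ≠ 0)
    (b ωhat : Fin n → ℝ) (Ahat : Matrix (Fin n) (Fin n) ℝ)
    (W : Matrix (Fin n) (Fin n) ℝ)
    (hW : ∀ j l, W j l = (1/ω₀) * (ωhat j * b l + b j * ωhat l) - (a/ω₀^2) * (ωhat j * ωhat l)) :
    (Matrix.fromBlocks
          (Matrix.of (fun i j : Fin 2 =>
            if i = 0 ∧ j = 0 then 0
            else if i = 1 ∧ j = 1 then a else ω₀))
          (Matrix.of (fun (i : Fin 2) (j : Fin n) =>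
            if i = 0 then ωhat j else b j))
          (Matrix.of (fun (j : Fin n) (i : Fin 2) =>
            if i = 0 then ωhat j else b j))
          Ahat).det = -(ω₀^2) * (Ahat - W).det := by
  set A₂ : Matrix (Fin 2) (Fin 2) ℝ := Matrix.of (fun i j : Fin 2 =>
            if i = 0 ∧ j = 0 then 0
            else if i = 1 ∧ j = 1 then a else ω₀) with hA₂
  set invA : Matrix (Fin 2) (Fin 2) ℝ := Matrix.of (fun i j : Fin 2 =>
            if i = 1 ∧ j = 1 then 0
            else if i = 0 ∧ j = 0 then -a/ω₀^2 else 1/ω₀) with hinvA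
  have h1 : invA * A₂ = 1 := by
    ext i j
    fin_cases i <;> fin_cases j <;>
      simp [Matrix.mul_apply, Fin.sum_univ_two, hA₂, hinvA] <;> field_simp <;> ring
  have h2 : A₂ * invA = 1 := by
    ext i j
    fin_cases i <;> fin_cases j <;>
      simp [Matrix.mul_apply, Fin.sum_univ_two, hA₂, hinvA] <;> field_simp <;> ring
  letI inst : Invertible A₂ := ⟨invA, h1, h2⟩
  rw [Matrix.det_fromBlocks₁₁]
  have hiA : (⅟A₂ : Matrix (Fin 2) (Fin 2) ℝ) = invA := rfl
  have hdet : A₂.det = -(ω₀^2) := by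
    rw [Matrix.det_fin_two]
    simp [hA₂]
    ring
  have hsc : Ahat - (Matrix.of (fun (j : Fin n) (i : Fin 2) =>
            if i = 0 then ωhat j else b j)) * ⅟A₂ *
      (Matrix.of (fun (i : Fin 2) (j : Fin n) => if i = 0 then ωhat j else b j)) = Ahat - W := by
    rw [hiA]
    ext j l
    simp only [Matrix.sub_apply, Matrix.mul_apply, Fin.sum_univ_two, Matrix.of_apply, hinvA, hW]
    norm_num
    field_simp
    ring
  rw [hsc, hdet]

lemma detT (n : ℕ) (a c : ℝ) (b : Fin n → ℝ) (Ahat : Matrix (Fin n) (Fin n) ℝ) :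
    (Matrix.fromBlocks (Matrix.of fun _ _ : Fin 1 => c * a * c)
      (Matrix.of fun (_ : Fin 1) j => c * b j)
      (Matrix.of fun j (_ : Fin 1) => c * b j) Ahat).det
    = c^2 * (Matrix.fromBlocks (a • (1 : Matrix (Fin 1) (Fin 1) ℝ))
      (Matrix.of fun (_ : Fin 1) j => b j)
      (Matrix.of fun j (_ : Fin 1) => b j) Ahat).det := by
  set D : Matrix (Fin 1 ⊕ Fin n) (Fin 1 ⊕ Fin n) ℝ :=
    Matrix.diagonal (Sum.elim (fun _ => c) (fun _ => 1)) with hD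
  set A' := Matrix.fromBlocks (a • (1 : Matrix (Fin 1) (Fin 1) ℝ))
      (Matrix.of fun (_ : Fin 1) j => b j)
      (Matrix.of fun j (_ : Fin 1) => b j) Ahat with hA'
  have key : Matrix.fromBlocks (Matrix.of fun _ _ : Fin 1 => c * a * c)
      (Matrix.of fun (_ : Fin 1) j => c * b j)
      (Matrix.of fun j (_ : Fin 1) => c * b j) Ahat = D * A' * D := by
    ext i j
    rw [Matrix.mul_diagonal, Matrix.diagonal_mul]
    rcases i with i | i <;> rcases j with j | j <;>
      simp [hA', Matrix.fromBlocks, Matrix.one_apply, Fin.fin_one_eq_zero] <;> ring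
  have hdD : D.det = c := by
    rw [hD, Matrix.det_diagonal, Fintype.prod_sum_type]
    simp
  rw [key, Matrix.det_mul, Matrix.det_mul, hdD]
  ring


/-- The central twist determinant identity for the averaged `N`-particle Hamiltonian
(`N = m+1 ≥ 2`, `d = n+1 ≥ 2`): with `S = (1/(ω₀N))(ω̂ᵀb + bᵀω̂ − (a/ω₀)ω̂ᵀω̂)`, an orthogonal
`R` with constant first row, truncated columns `R_k`, and the block matrix `M` with
upper-left `(a/N)·I`, upper-right blocks `(1/√N) R_k b`, diagonal blocks `Â − S` and
off-diagonal blocks `−S`, one has `det M = −(1/ω₀²)((det A)/N)^{N−1} det A_ω`. -/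
theorem averaged_twist_determinant (m n : ℕ) (hm : 1 ≤ m) (hn : 1 ≤ n)
    (a ω₀ : ℝ) (ha : 0 < a) (hω₀ : ω₀ ≠ 0)
    (b ωhat : Fin n → ℝ) (Ahat : Matrix (Fin n) (Fin n) ℝ) (hAhat : Ahat.IsSymm)
    (S : Matrix (Fin n) (Fin n) ℝ)
    (hS : ∀ j l, S j l = (1 / (ω₀ * (m + 1 : ℝ))) *
        (ωhat j * b l + b j * ωhat l - (a / ω₀) * (ωhat j * ωhat l)))
    (R : Matrix (Fin (m + 1)) (Fin (m + 1)) ℝ)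
    (horth : Rᵀ * R = 1 ∧ R * Rᵀ = 1)
    (hrow : ∀ j, R 0 j = 1 / Real.sqrt (m + 1))
    (M : Matrix (Fin m ⊕ (Fin (m + 1) × Fin n)) (Fin m ⊕ (Fin (m + 1) × Fin n)) ℝ)
    (hM₁ : ∀ j k : Fin m, M (Sum.inl j) (Sum.inl k) = if j = k then a / (m + 1 : ℝ) else 0)
    (hM₂ : ∀ (j : Fin m) (p : Fin (m + 1) × Fin n),
        M (Sum.inl j) (Sum.inr p) = (1 / Real.sqrt (m + 1)) * R j.succ p.1 * b p.2)
    (hM₃ : ∀ (p : Fin (m + 1) × Fin n) (j : Fin m),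
        M (Sum.inr p) (Sum.inl j) = (1 / Real.sqrt (m + 1)) * R j.succ p.1 * b p.2)
    (hM₄ : ∀ p q : Fin (m + 1) × Fin n,
        M (Sum.inr p) (Sum.inr q)
          = (if p.1 = q.1 then Ahat p.2 q.2 else 0) - S p.2 q.2) :
    M.det = -(1 / ω₀ ^ 2) *
        ((Matrix.fromBlocks (a • (1 : Matrix (Fin 1) (Fin 1) ℝ))
            (Matrix.of fun (_ : Fin 1) j => b j)
            (Matrix.of fun j (_ : Fin 1) => b j) Ahat).det / (m + 1 : ℝ)) ^ m *
        (Matrix.fromBlocks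
          (Matrix.of (fun i j : Fin 2 =>
            if i = 0 ∧ j = 0 then 0
            else if i = 1 ∧ j = 1 then a else ω₀))
          (Matrix.of (fun (i : Fin 2) (j : Fin n) =>
            if i = 0 then ωhat j else b j))
          (Matrix.of (fun (j : Fin n) (i : Fin 2) =>
            if i = 0 then ωhat j else b j))
          Ahat).det := by
  have hNpos : (0:ℝ) < (m:ℝ) + 1 := by positivity
  have hsq : Real.sqrt ((m:ℝ)+1) * Real.sqrt ((m:ℝ)+1) = (m:ℝ)+1 :=
    Real.mul_self_sqrt hNpos.le
  have hsqpos : 0 < Real.sqrt ((m:ℝ)+1) := Real.sqrt_pos.2 hNpos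
  set c : ℝ := 1 / Real.sqrt ((m:ℝ)+1) with hcdef
  have hR1 : ∀ i j, (∑ k, R i k * R j k) = if i = j then (1:ℝ) else 0 := by
    intro i j
    have := congrFun (congrFun horth.2 i) j
    simpa [Matrix.mul_apply, Matrix.transpose_apply, Matrix.one_apply] using this
  have hR2 : ∀ i, (∑ k, R i k) = if i = 0 then Real.sqrt ((m:ℝ)+1) else 0 := by
    intro i
    have key : ∀ k, R i k = Real.sqrt ((m:ℝ)+1) * (R i k * R 0 k) := by
      intro k
      rw [hrow k, mul_comm (R i k) (1 / Real.sqrt ((m:ℝ)+1)), ← mul_assoc,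
        mul_one_div, div_self hsqpos.ne', one_mul]
    calc (∑ k, R i k) = ∑ k, Real.sqrt ((m:ℝ)+1) * (R i k * R 0 k) :=
          Finset.sum_congr rfl (fun k _ => key k)
      _ = Real.sqrt ((m:ℝ)+1) * ∑ k, R i k * R 0 k := by rw [Finset.mul_sum]
      _ = _ := by rw [hR1]; split_ifs <;> simp
  -- the conjugating matrix
  set K : Matrix (Fin (m+1) × Fin n) (Fin (m+1) × Fin n) ℝ :=
    R ⊗ₖ (1 : Matrix (Fin n) (Fin n) ℝ) with hK
  set U : Matrix (Fin m ⊕ (Fin (m+1) × Fin n)) (Fin m ⊕ (Fin (m+1) × Fin n)) ℝ :=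
    Matrix.fromBlocks 1 0 0 K with hU
  -- blocks of M'
  set A₁ : Matrix (Fin m) (Fin m) ℝ :=
    Matrix.of fun j k => if j = k then a/((m:ℝ)+1) else 0 with hA₁
  set B₁ : Matrix (Fin m) (Fin (m+1) × Fin n) ℝ :=
    Matrix.of fun j q => if q.1 = j.succ then c * b q.2 else 0 with hB₁
  set C₁ : Matrix (Fin (m+1) × Fin n) (Fin m) ℝ :=
    Matrix.of fun p k => if p.1 = k.succ then c * b p.2 else 0 with hC₁
  set D₁ : Matrix (Fin (m+1) × Fin n) (Fin (m+1) × Fin n) ℝ :=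
    Matrix.of fun p q => (if p.1 = q.1 then Ahat p.2 q.2 else 0) -
      (if p.1 = 0 ∧ q.1 = 0 then ((m:ℝ)+1) * S p.2 q.2 else 0) with hD₁
  set M' := Matrix.fromBlocks A₁ B₁ C₁ D₁ with hM'
  have hMb : M = Matrix.fromBlocks M.toBlocks₁₁ M.toBlocks₁₂ M.toBlocks₂₁ M.toBlocks₂₂ :=
    (Matrix.fromBlocks_toBlocks M).symm
  have hUM : U * M = M' * U := by
    rw [hMb, hU, hM', Matrix.fromBlocks_multiply, Matrix.fromBlocks_multiply]
    simp only [Matrix.one_mul, Matrix.zero_mul, Matrix.mul_one, Matrix.mul_zero,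
      add_zero, zero_add]
    rw [Matrix.fromBlocks_inj]
    refine ⟨?_, ?_, ?_, ?_⟩
    · ext j k
      simp [Matrix.toBlocks₁₁, hM₁, hA₁]
    · ext j q
      simp only [Matrix.toBlocks₁₂, Matrix.of_apply, Matrix.mul_apply, hB₁, hK,
        Matrix.kroneckerMap_apply, Matrix.one_apply, Fintype.sum_prod_type, hM₂,
        mul_ite, mul_zero, mul_one, ite_mul, zero_mul,
        Finset.sum_ite_eq, Finset.sum_ite_eq', Finset.mem_univ, if_true]
      ring
    · ext p k
      simp only [Matrix.toBlocks₂₁, Matrix.of_apply, Matrix.mul_apply, hC₁, hK,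
        Matrix.kroneckerMap_apply, Matrix.one_apply, Fintype.sum_prod_type, hM₃,
        mul_ite, mul_zero, mul_one, ite_mul, zero_mul,
        Finset.sum_ite_eq, Finset.sum_ite_eq', Finset.mem_univ, if_true]
      have step : ∀ k1, R p.1 k1 * (c * R k.succ k1 * b p.2)
          = (R p.1 k1 * R k.succ k1) * (c * b p.2) := fun k1 => by ring
      rw [Finset.sum_congr rfl (fun k1 _ => step k1), ← Finset.sum_mul, hR1]
      split_ifs <;> simp
    · ext p q
      simp only [Matrix.toBlocks₂₂, Matrix.of_apply, Matrix.mul_apply, hD₁, hK,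
        Matrix.kroneckerMap_apply, Matrix.one_apply, Fintype.sum_prod_type, hM₄,
        mul_ite, mul_zero, mul_one, ite_mul, zero_mul, mul_sub, sub_mul,
        Finset.sum_ite_eq, Finset.sum_ite_eq', Finset.mem_univ, if_true,
        Finset.sum_sub_distrib]
      have e1 : (∑ x : Fin (m+1), ∑ x1 : Fin n,
          if x = q.1 then if p.2 = x1 then R p.1 x * Ahat x1 q.2 else 0 else 0)
          = R p.1 q.1 * Ahat p.2 q.2 := by
        rw [Finset.sum_comm]
        simp
      rw [e1, ← Finset.sum_mul, hR2]
      have hNc : ((m:ℝ)+1) * c = Real.sqrt ((m:ℝ)+1) := by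
        rw [hcdef, mul_one_div, div_eq_iff hsqpos.ne']
        exact hsq.symm
      by_cases hp : p.1 = 0
      · simp only [hp, if_true, true_and, Finset.sum_ite_eq', Finset.mem_univ, hrow]
        linear_combination (S p.2 q.2) * hNc
      · simp only [hp, if_false, false_and, Finset.sum_const_zero]
        ring
  have hUUT : U * Uᵀ = 1 := by
    rw [hU, Matrix.fromBlocks_transpose, Matrix.fromBlocks_multiply]
    simp only [Matrix.transpose_one, Matrix.transpose_zero, Matrix.one_mul, Matrix.mul_zero,
      Matrix.zero_mul, add_zero, zero_add, Matrix.mul_one]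
    have hKT : Kᵀ = Rᵀ ⊗ₖ (1 : Matrix (Fin n) (Fin n) ℝ) := by
      rw [hK, ← Matrix.kroneckerMap_transpose, Matrix.transpose_one]
    have hKK : K * Kᵀ = 1 := by
      rw [hKT, hK, ← Matrix.mul_kronecker_mul, horth.2, Matrix.one_mul,
        Matrix.one_kronecker_one]
    rw [hKK, Matrix.fromBlocks_one]
  have hdetU : U.det * U.det = 1 := by
    have := congrArg Matrix.det hUUT
    rwa [Matrix.det_mul, Matrix.det_transpose, Matrix.det_one] at this
  have hdetUne : U.det ≠ 0 := left_ne_zero_of_mul_eq_one hdetU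
  have hdetMM' : M.det = M'.det := by
    have h := congrArg Matrix.det hUM
    rw [Matrix.det_mul, Matrix.det_mul] at h
    rw [mul_comm M'.det U.det] at h
    exact mul_left_cancel₀ hdetUne h
  -- reindex M' to block-diagonal form
  set T : Matrix (Fin 1 ⊕ Fin n) (Fin 1 ⊕ Fin n) ℝ :=
    Matrix.fromBlocks (Matrix.of fun _ _ : Fin 1 => a/((m:ℝ)+1))
      (Matrix.of fun (_ : Fin 1) s => c * b s)
      (Matrix.of fun s (_ : Fin 1) => c * b s) Ahat with hT
  set M'' : Matrix ((Fin n) ⊕ ((Fin 1 ⊕ Fin n) × Fin m)) ((Fin n) ⊕ ((Fin 1 ⊕ Fin n) × Fin m)) ℝ :=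
    Matrix.fromBlocks (Ahat - ((m:ℝ)+1) • S) 0 0
      (Matrix.blockDiagonal fun _ : Fin m => T) with hM''
  let f : (Fin n ⊕ ((Fin 1 ⊕ Fin n) × Fin m)) ≃ (Fin m ⊕ (Fin (m+1) × Fin n)) :=
  { toFun := fun x => match x with
      | .inl s => .inr (0, s)
      | .inr (.inl _, j) => .inl j
      | .inr (.inr s, j) => .inr (j.succ, s)
    invFun := fun y => match y with
      | .inl j => .inr (.inl 0, j)
      | .inr p => Fin.cases (Sum.inl p.2) (fun i => Sum.inr (Sum.inr p.2, i)) p.1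
    left_inv := by
      rintro (s | ⟨z | s, j⟩)
      · simp
      · simp [Subsingleton.elim (0 : Fin 1) z]
      · simp
    right_inv := by
      rintro (j | ⟨p1, p2⟩)
      · rfl
      · induction p1 using Fin.cases <;> simp }
  have hsub : M'' = M'.submatrix f f := by
    ext i j
    rcases i with s | ⟨z | s, j'⟩ <;> rcases j with t | ⟨w | t, k'⟩ <;>
      simp [hM'', hM', hT, f, Matrix.submatrix_apply, Matrix.blockDiagonal_apply,
        hA₁, hB₁, hC₁, hD₁, Fin.succ_ne_zero, (Fin.succ_ne_zero _).symm,
        Fin.succ_inj, Matrix.fromBlocks_apply₁₁, Matrix.fromBlocks_apply₁₂,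
        Matrix.fromBlocks_apply₂₁, Matrix.fromBlocks_apply₂₂, eq_comm]
  have hdetM'M'' : M'.det = M''.det := by
    rw [hsub, Matrix.det_submatrix_equiv_self]
  have hdetM'' : M''.det = (Ahat - ((m:ℝ)+1) • S).det * T.det ^ m := by
    rw [hM'', Matrix.det_fromBlocks_zero₂₁, Matrix.det_blockDiagonal,
      Finset.prod_const, Finset.card_univ, Fintype.card_fin]
  -- determinant of T
  have hc : c * c = 1 / ((m:ℝ)+1) := by
    rw [hcdef, div_mul_div_comm, one_mul, hsq]
  have hTdet : T.det = (Matrix.fromBlocks (a • (1 : Matrix (Fin 1) (Fin 1) ℝ))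
      (Matrix.of fun (_ : Fin 1) j => b j)
      (Matrix.of fun j (_ : Fin 1) => b j) Ahat).det / ((m:ℝ)+1) := by
    have hca : a / ((m:ℝ)+1) = c * a * c := by
      rw [mul_comm c a, mul_assoc, hc]
      ring
    have hTc : T = Matrix.fromBlocks (Matrix.of fun _ _ : Fin 1 => c * a * c)
        (Matrix.of fun (_ : Fin 1) s => c * b s)
        (Matrix.of fun s (_ : Fin 1) => c * b s) Ahat := by
      rw [hT, hca]
    rw [hTc, detT n a c b Ahat, sq, hc]
    ring
  -- Schur complement step
  have hW : ∀ j l, (((m:ℝ)+1) • S) j l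
      = (1/ω₀) * (ωhat j * b l + b j * ωhat l) - (a/ω₀^2) * (ωhat j * ωhat l) := by
    intro j l
    rw [Matrix.smul_apply, smul_eq_mul, hS]
    field_simp
  have hAω := schur_piece n a ω₀ hω₀ b ωhat Ahat (((m:ℝ)+1) • S) hW
  rw [hdetMM', hdetM'M'', hdetM'', hTdet, hAω]
  have hω2 : (ω₀:ℝ)^2 ≠ 0 := pow_ne_zero 2 hω₀
  field_simp
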